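/- Let $\hat{u}$ denote the Fourier transform. For the constant-coefficient linear system $\partial_t u_1 + \partial_x^3 u_1 + \delta \partial_x^3 u_2 = 0$, $\partial_t u_2 + \partial_x^3 u_2 = 0$ on $\mathbb{R}$ with $\delta \neq 0$, the solution with Fourier data $\hat{u}_{0,1} = 0$, $\hat{u}_{0,2}(\xi) = \langle\xi\rangle^{-s-1}$ is given on the Fourier side by $\hat{u}_1(\xi,t) = e^{i\xi^3 t}\, \delta\, i \xi^3 t\, \hat{u}_{0,2}(\xi)$ and $\hat{u}_2(\xi,t) = e^{i\xi^3 t}\hat{u}_{0,2}(\xi)$; moreover $\|u_0\|_{H^s}^2 = \pi$ while for any $t \neq 0$ the $H^s$ norm of $u_1(\cdot,t)$ is infinite, i.e. $\int \langle\xi\rangle^{2s}|\hat{u}_1(\xi,t)|^2 d\xi = \infty$. -/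

import Mathlib

open MeasureTheory Complex

/-- Ill-posedness of the non-symmetric constant-coefficient system
`∂ₜu₁ + ∂ₓ³u₁ + δ ∂ₓ³u₂ = 0`, `∂ₜu₂ + ∂ₓ³u₂ = 0` with Fourier data
`û₀,₁ = 0`, `û₀,₂(ξ) = ⟨ξ⟩^{-s-1}`: the explicit Fourier-side solution
`û₁(ξ,t) = e^{iξ³t} δ i ξ³ t ⟨ξ⟩^{-s-1}`, `û₂(ξ,t) = e^{iξ³t} ⟨ξ⟩^{-s-1}`
solves the system (since `𝓕(∂ₓ³u) = (iξ)³ û`), the data has `‖u₀‖²_{H^s} = π`,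
and for every `t ≠ 0` the `H^s` norm of `u₁(·,t)` is infinite. -/
theorem stmt_0 (s δ : ℝ) (hδ : δ ≠ 0) (u₁hat u₂hat : ℝ → ℝ → ℂ)
    (hu₁ : ∀ ξ t, u₁hat ξ t =
      Complex.exp (I * ξ ^ 3 * t) * (δ * I * ξ ^ 3 * t) * ((1 + ξ ^ 2) ^ ((-s - 1) / 2) : ℝ))
    (hu₂ : ∀ ξ t, u₂hat ξ t =
      Complex.exp (I * ξ ^ 3 * t) * ((1 + ξ ^ 2) ^ ((-s - 1) / 2) : ℝ)) :
    -- the Fourier-side equations ∂ₜû₁ = -(iξ)³(û₁ + δ û₂), ∂ₜû₂ = -(iξ)³ û₂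
    (∀ ξ t : ℝ, HasDerivAt (fun τ => u₁hat ξ τ)
      (-(I * ξ) ^ 3 * (u₁hat ξ t + δ * u₂hat ξ t)) t) ∧
    (∀ ξ t : ℝ, HasDerivAt (fun τ => u₂hat ξ τ) (-(I * ξ) ^ 3 * u₂hat ξ t) t) ∧
    -- the initial data: û₁(ξ,0) = 0, and ‖u₀‖²_{H^s} = π
    (∀ ξ : ℝ, u₁hat ξ 0 = 0) ∧
    (∫ ξ : ℝ, (1 + ξ ^ 2) ^ s * (‖u₁hat ξ 0‖ ^ 2 + ‖u₂hat ξ 0‖ ^ 2)) = Real.pi ∧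
    -- for t ≠ 0, the H^s norm of u₁(·,t) is infinite
    (∀ t : ℝ, t ≠ 0 →
      (∫⁻ ξ : ℝ, ENNReal.ofReal ((1 + ξ ^ 2) ^ s * ‖u₁hat ξ t‖ ^ 2)) = ⊤) := by
  have hI3 : ∀ ξ : ℝ, -(I * (ξ:ℂ)) ^ 3 = I * ξ ^ 3 := by
    intro ξ
    have : (I:ℂ)^3 = -I := by simp [pow_succ, Complex.I_mul_I]
    rw [mul_pow, this]; ring
  have hid : ∀ t : ℝ, HasDerivAt (fun τ : ℝ => (τ : ℂ)) 1 t := fun t => by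
    exact (hasDerivAt_id t).ofReal_comp
  have hderiv : ∀ ξ t : ℝ, HasDerivAt (fun τ : ℝ => Complex.exp (I * ξ^3 * τ))
      (I * ξ^3 * Complex.exp (I * ξ^3 * t)) t := fun ξ t => by
    simpa [mul_comm] using (((hid t).const_mul (I * (ξ:ℂ)^3)).cexp)
  refine ⟨?_, ?_, ?_, ?_, ?_⟩
  · intro ξ t
    simp only [hu₁, hu₂]
    have hlin : HasDerivAt (fun τ : ℝ => ((δ:ℂ) * I * ξ^3 * τ)) ((δ:ℂ) * I * ξ^3) t := by
      simpa using (hid t).const_mul ((δ:ℂ) * I * (ξ:ℂ)^3)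
    have h := ((hderiv ξ t).mul hlin).mul_const (((1 + ξ^2) ^ ((-s-1)/2) : ℝ) : ℂ)
    refine h.congr_deriv ?_
    rw [hI3]; ring
  · intro ξ t
    simp only [hu₂]
    have h := (hderiv ξ t).mul_const (((1 + ξ^2) ^ ((-s-1)/2) : ℝ) : ℂ)
    refine h.congr_deriv ?_
    rw [hI3]; ring
  · intro ξ; rw [hu₁]; push_cast; ring
  · have key : ∀ ξ : ℝ, (1+ξ^2)^s * (‖u₁hat ξ 0‖^2 + ‖u₂hat ξ 0‖^2) = (1+ξ^2)⁻¹ := by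
      intro ξ
      have hpos : (0:ℝ) < 1 + ξ^2 := by positivity
      have hc0 : (0:ℝ) ≤ (1+ξ^2) ^ ((-s-1)/2) := Real.rpow_nonneg hpos.le _
      have hsq : ((1+ξ^2)^((-s-1)/2))^2 = (1+ξ^2)^(-s-1) := by
        rw [← Real.rpow_natCast ((1+ξ^2)^((-s-1)/2)) 2, ← Real.rpow_mul hpos.le]
        norm_num
      have hmul : (1+ξ^2)^s * (1+ξ^2)^(-s-1) = (1+ξ^2)⁻¹ := by
        rw [← Real.rpow_add hpos, show s + (-s-1) = -1 by ring, Real.rpow_neg_one]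
      rw [hu₁, hu₂]
      simp only [Complex.ofReal_zero, mul_zero, zero_mul, norm_zero, Complex.exp_zero, one_mul,
        Complex.norm_real, Real.norm_of_nonneg hc0]
      rw [zero_pow (by norm_num : (2:ℕ) ≠ 0), zero_add, hsq, hmul]
    simp only [key]
    exact integral_univ_inv_one_add_sq
  · intro t ht
    set c : ℝ := δ^2 * t^2 / 2 with hc
    have hcpos : 0 < c := by positivity
    have hbound : ∀ ξ : ℝ, Set.indicator (Set.Ici (1:ℝ)) (fun _ => ENNReal.ofReal c) ξ ≤
        ENNReal.ofReal ((1+ξ^2)^s * ‖u₁hat ξ t‖^2) := by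
      intro ξ
      by_cases hξ : ξ ∈ Set.Ici (1:ℝ)
      · rw [Set.indicator_of_mem hξ]
        apply ENNReal.ofReal_le_ofReal
        have h1 : (1:ℝ) ≤ ξ := hξ
        have hpos : (0:ℝ) < 1 + ξ^2 := by positivity
        have hc0 : (0:ℝ) ≤ (1+ξ^2) ^ ((-s-1)/2) := Real.rpow_nonneg hpos.le _
        have hn : ‖u₁hat ξ t‖ = |δ| * |ξ|^3 * |t| * (1+ξ^2)^((-s-1)/2) := by
          rw [hu₁, norm_mul, norm_mul]
          rw [show ‖Complex.exp (I * (ξ:ℂ)^3 * (t:ℝ))‖ = 1 by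
            rw [Complex.norm_exp]; simp [← Complex.ofReal_pow]]
          rw [Complex.norm_real, Real.norm_of_nonneg hc0]
          rw [show ‖(↑δ * I * (ξ:ℂ)^3 * (t:ℝ) : ℂ)‖ = |δ| * |ξ|^3 * |t| by
            simp [norm_mul, Complex.norm_real, Complex.norm_I]]
          ring
        rw [hn]
        have hsq : ((1+ξ^2)^((-s-1)/2))^2 = (1+ξ^2)^(-s-1) := by
          rw [← Real.rpow_natCast ((1+ξ^2)^((-s-1)/2)) 2, ← Real.rpow_mul hpos.le]
          norm_num
        have hmul : (1+ξ^2)^s * (1+ξ^2)^(-s-1) = (1+ξ^2)⁻¹ := by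
          rw [← Real.rpow_add hpos, show s + (-s-1) = -1 by ring, Real.rpow_neg_one]
        have h6 : (|ξ|^3)^2 = ξ^6 := by rw [← _root_.abs_pow, _root_.sq_abs]; ring
        have hthis : (1+ξ^2)^s * (|δ| * |ξ|^3 * |t| * (1+ξ^2)^((-s-1)/2))^2
            = δ^2 * ξ^6 * t^2 * (1+ξ^2)⁻¹ := by
          rw [mul_pow, mul_pow, mul_pow, hsq, h6, _root_.sq_abs, _root_.sq_abs]
          linear_combination (δ^2 * ξ^6 * t^2) * hmul
        rw [hthis, ← div_eq_mul_inv, le_div_iff₀ hpos]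
        have hξ6 : (1:ℝ) ≤ ξ^6 := one_le_pow₀ h1
        have hξ26 : ξ^2 ≤ ξ^6 := pow_le_pow_right₀ h1 (by norm_num)
        have hkey : (0:ℝ) ≤ δ^2 * t^2 * (2*ξ^6 - 1 - ξ^2) :=
          mul_nonneg (mul_nonneg (sq_nonneg δ) (sq_nonneg t)) (by linarith)
        rw [hc]
        nlinarith [hkey]
      · simp [Set.indicator_of_notMem hξ]
    have hle := lintegral_mono (μ := volume) hbound
    rw [lintegral_indicator measurableSet_Ici _, setLIntegral_const, Real.volume_Ici,
      ENNReal.mul_top (by simpa using hcpos)] at hle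
    exact top_le_iff.mp hle
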